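/- Consider iteratively refined partitions Pi_k of the interval [0, ns], where Pi_n consists of the n intervals of length s, and Pi_{k+1} arises from Pi_k by splitting one element [a, b) into [a, (a+b)/2) and [(a+b)/2, b) chosen uniformly at random. Then almost surely max over pi in Pi_k of the length |pi| tends to 0 as k -> infinity. -/

import Mathlib

open MeasureTheory Filter ENNReal

namespace Stmt13

noncomputable section

open scoped Classical

/-- result of splitting element `b` of `m`. -/
def split (m : Multiset ℝ) (b : ℝ) : Multiset ℝ := b / 2 ::ₘ b / 2 ::ₘ m.erase b

/-- all possible splits of `m`. -/
def splits (m : Multiset ℝ) : Finset (Multiset ℝ) := m.toFinset.image (split m)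

/-- reachable states: `RR s n j` is the set of possible values of the partition at time `n+j`. -/
def RR (s : ℝ) (n : ℕ) : ℕ → Finset (Multiset ℝ)
  | 0 => {Multiset.replicate n s}
  | j + 1 => (RR s n j).biUnion splits

def q (b : ℝ) : ℝ≥0∞ := ENNReal.ofReal (b ^ 2)

/-- sum of squares of the elements of `m`. -/
def S (m : Multiset ℝ) : ℝ≥0∞ := (m.map q).sum

lemma S_cons (a : ℝ) (m : Multiset ℝ) : S (a ::ₘ m) = q a + S m := by simp [S]

lemma S_ne_top (m : Multiset ℝ) : S m ≠ ⊤ := by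
  induction m using Multiset.induction with
  | empty => simp [S]
  | cons a m ih => rw [S_cons]; exact ENNReal.add_ne_top.2 ⟨by simp [q], ih⟩

lemma q_mem_le_S {b : ℝ} {m : Multiset ℝ} (hb : b ∈ m) : q b ≤ S m := by
  rw [← Multiset.cons_erase hb, S_cons]; exact le_self_add

lemma two_S_split {b : ℝ} {m : Multiset ℝ} (hb : b ∈ m) :
    2 * S (split m b) + q b = 2 * S m := by
  have h2 : S m = q b + S (m.erase b) := by
    conv_lhs => rw [← Multiset.cons_erase hb]
    rw [S_cons]
  have h1 : q (b / 2) * 4 = q b := by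
    simp only [q, div_pow]
    rw [show ((4:ℝ≥0∞)) = ENNReal.ofReal 4 by norm_num, ← ENNReal.ofReal_mul (by positivity)]
    congr 1
    ring
  rw [split, S_cons, S_cons, h2]
  calc 2 * (q (b / 2) + (q (b / 2) + S (m.erase b))) + q b
      = q (b / 2) * 4 + (2 * S (m.erase b) + q b) := by ring
    _ = 2 * (q b + S (m.erase b)) := by rw [h1]; ring

lemma S_split_le {b : ℝ} {m : Multiset ℝ} (hb : b ∈ m) : S (split m b) ≤ S m := by
  have h := two_S_split hb
  have : 2 * S (split m b) ≤ 2 * S m := le_of_le_of_eq le_self_add h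
  exact (ENNReal.mul_le_mul_iff_right (by norm_num) (by norm_num)).1 this

lemma pos_of_mem_RR {s : ℝ} (hs : 0 < s) {n j : ℕ} {m : Multiset ℝ}
    (hm : m ∈ RR s n j) : ∀ b ∈ m, 0 < b := by
  induction j generalizing m with
  | zero =>
    simp only [RR, Finset.mem_singleton] at hm
    subst hm
    intro b hb
    rw [Multiset.eq_of_mem_replicate hb]; exact hs
  | succ j ih =>
    simp only [RR, Finset.mem_biUnion] at hm
    obtain ⟨m', hm', hsp⟩ := hm
    simp only [splits, Finset.mem_image, Multiset.mem_toFinset] at hsp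
    obtain ⟨b, hb, rfl⟩ := hsp
    intro c hc
    simp only [split, Multiset.mem_cons] at hc
    rcases hc with rfl | rfl | hc
    · exact half_pos (ih hm' b hb)
    · exact half_pos (ih hm' b hb)
    · exact ih hm' c (Multiset.mem_of_mem_erase hc)

lemma card_of_mem_RR {s : ℝ} {n j : ℕ} {m : Multiset ℝ}
    (hm : m ∈ RR s n j) : Multiset.card m = n + j := by
  induction j generalizing m with
  | zero => simp only [RR, Finset.mem_singleton] at hm; subst hm; simp
  | succ j ih =>
    simp only [RR, Finset.mem_biUnion] at hm
    obtain ⟨m', hm', hsp⟩ := hm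
    simp only [splits, Finset.mem_image, Multiset.mem_toFinset] at hsp
    obtain ⟨b, hb, rfl⟩ := hsp
    have hne : m' ≠ 0 := fun h => by simp [h] at hb
    have h1 : 1 ≤ Multiset.card m' := Multiset.card_pos.2 hne
    rw [ih hm'] at h1
    simp only [split, Multiset.card_cons, Multiset.card_erase_of_mem hb, ih hm',
      Nat.pred_eq_sub_one]
    omega

lemma split_inj {m : Multiset ℝ} (hpos : ∀ b ∈ m, 0 < b) {b b' : ℝ}
    (hb : b ∈ m) (hb' : b' ∈ m) (h : split m b = split m b') : b = b' := by
  by_contra hne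
  have hcount := congrArg (Multiset.count b) h
  have hbpos := hpos b hb
  have hb2 : b / 2 ≠ b := by intro h'; nlinarith
  have hleft : Multiset.count b (split m b) = Multiset.count b m - 1 := by
    rw [split, Multiset.count_cons_of_ne (Ne.symm hb2), Multiset.count_cons_of_ne (Ne.symm hb2),
      Multiset.count_erase_self]
  have hright : Multiset.count b (split m b') =
      (if b = b' / 2 then 2 else 0) + Multiset.count b m := by
    rw [split, Multiset.count_cons, Multiset.count_cons, Multiset.count_erase_of_ne hne]
    split_ifs <;> ring
  rw [hleft, hright] at hcount
  have h1 : 1 ≤ Multiset.count b m := Multiset.one_le_count_iff_mem.2 hb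
  split_ifs at hcount <;> omega

/-- splits of a reachable state are reachable. -/
lemma splits_subset_RR {s : ℝ} {n j : ℕ} {m : Multiset ℝ} (hm : m ∈ RR s n j) :
    splits m ⊆ RR s n (j + 1) := fun m' hm' => Finset.mem_biUnion.2 ⟨m, hm, hm'⟩

/-- key algebraic identity: expected (unnormalized) sum of squares after one split. -/
lemma key_identity (m : Multiset ℝ) :
    2 * ∑ b ∈ m.toFinset, (m.count b : ℝ≥0∞) * S (split m b) + S m
      = 2 * (Multiset.card m : ℝ≥0∞) * S m := by
  have hq : ∑ b ∈ m.toFinset, (m.count b : ℝ≥0∞) * q b = S m := by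
    rw [S, Finset.sum_multiset_map_count]
    simp [nsmul_eq_mul]
  have hc : ∑ b ∈ m.toFinset, (m.count b : ℝ≥0∞) = (Multiset.card m : ℝ≥0∞) := by
    rw [← Nat.cast_sum]
    norm_cast
    exact Multiset.toFinset_sum_count_eq m
  calc 2 * ∑ b ∈ m.toFinset, (m.count b : ℝ≥0∞) * S (split m b) + S m
      = ∑ b ∈ m.toFinset, (m.count b : ℝ≥0∞) * (2 * S (split m b) + q b) := by
        rw [Finset.mul_sum, ← hq, ← Finset.sum_add_distrib]
        congr 1; ext b; ring
    _ = ∑ b ∈ m.toFinset, (m.count b : ℝ≥0∞) * (2 * S m) := by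
        apply Finset.sum_congr rfl
        intro b hb
        rw [two_S_split (Multiset.mem_toFinset.1 hb)]
    _ = 2 * (Multiset.card m : ℝ≥0∞) * S m := by
        rw [← Finset.sum_mul, hc]; ring

end

end Stmt13

theorem stmt13 {Ω : Type*} [MeasurableSpace Ω] (μ : Measure Ω) [IsProbabilityMeasure μ]
    (s : ℝ) (hs : 0 < s) (n : ℕ) (hn : 1 ≤ n)
    (M : ℕ → Ω → Multiset ℝ)
    (hcard : ∀ k ≥ n, ∀ ω, Multiset.card (M k ω) = k)
    (hinit : ∀ ω, M n ω = Multiset.replicate n s)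
    (hstep : ∀ k ≥ n, ∀ᵐ ω ∂μ, ∃ b ∈ M k ω,
      M (k + 1) ω = b / 2 ::ₘ b / 2 ::ₘ (M k ω).erase b)
    (hunif : ∀ k ≥ n, ∀ m : Multiset ℝ, ∀ b ∈ m,
      μ {ω | M k ω = m ∧ M (k + 1) ω = b / 2 ::ₘ b / 2 ::ₘ m.erase b}
        = ((m.count b : ℝ≥0∞) / (k : ℝ≥0∞)) * μ {ω | M k ω = m}) :
    ∀ᵐ ω ∂μ, Tendsto (fun k : ℕ => sSup {b : ℝ | b ∈ M k ω}) atTop (nhds 0) := by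
  classical
  open Stmt13 in
  -- a.e. reachability
  have hreach : ∀ j : ℕ, ∀ᵐ ω ∂μ, M (n + j) ω ∈ RR s n j := by
    intro j
    induction j with
    | zero =>
      filter_upwards with ω
      simp [RR, hinit ω]
    | succ j ih =>
      filter_upwards [ih, hstep (n + j) (Nat.le_add_right n j)] with ω h1 h2
      obtain ⟨b, hb, heq⟩ := h2
      have h3 : M (n + (j + 1)) ω = split (M (n + j) ω) b := by
        rw [show n + (j + 1) = n + j + 1 by ring, heq]; rfl
      rw [h3]
      exact splits_subset_RR h1 (Finset.mem_image.2 ⟨b, Multiset.mem_toFinset.2 hb, rfl⟩)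
  set p : ℕ → Multiset ℝ → ℝ≥0∞ := fun k m => μ {ω | M k ω = m} with hp
  set T : ℕ → ℝ≥0∞ := fun j => ∑ m ∈ RR s n j, S m * p (n + j) m with hT
  have hTtop : ∀ j, T j ≠ ⊤ := by
    intro j
    refine (ENNReal.sum_lt_top.2 fun m _ => ?_).ne
    exact ENNReal.mul_lt_top (S_ne_top m).lt_top (measure_lt_top μ _)
  -- contraction step
  have hcontr : ∀ j : ℕ, 2 * ((n + j : ℕ) : ℝ≥0∞) * T (j + 1)
      ≤ ((2 * (n + j) - 1 : ℕ) : ℝ≥0∞) * T j := by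
    intro j
    have hk0 : ((n + j : ℕ) : ℝ≥0∞) ≠ 0 := by
      simp only [ne_eq, Nat.cast_eq_zero]; omega
    have hktop : ((n + j : ℕ) : ℝ≥0∞) ≠ ⊤ := ENNReal.natCast_ne_top _
    have hnull : ∀ (m : Multiset ℝ), ∀ m' ∉ splits m,
        μ {ω | M (n + j) ω = m ∧ M (n + j + 1) ω = m'} = 0 := by
      intro m m' hm'
      refine measure_mono_null ?_ ((ae_iff).1 (hstep (n + j) (Nat.le_add_right n j)))
      rintro ω ⟨h1, h2⟩
      simp only [Set.mem_setOf_eq]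
      rintro ⟨b, hb, heq⟩
      refine hm' (Finset.mem_image.2 ⟨b, Multiset.mem_toFinset.2 (h1 ▸ hb), ?_⟩)
      rw [split, ← h1, ← heq, h2]
    have hA : ∀ m' : Multiset ℝ, μ {ω | M (n + j + 1) ω = m'}
        ≤ ∑ m ∈ RR s n j, μ {ω | M (n + j) ω = m ∧ M (n + j + 1) ω = m'} := by
      intro m'
      have hcover : {ω | M (n + j + 1) ω = m'} ⊆
          {ω | ¬ M (n + j) ω ∈ RR s n j} ∪
            ⋃ m ∈ RR s n j, {ω | M (n + j) ω = m ∧ M (n + j + 1) ω = m'} := by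
        intro ω hω
        by_cases h : M (n + j) ω ∈ RR s n j
        · exact Or.inr (Set.mem_biUnion h ⟨rfl, hω⟩)
        · exact Or.inl h
      calc μ {ω | M (n + j + 1) ω = m'}
          ≤ μ {ω | ¬ M (n + j) ω ∈ RR s n j} +
            μ (⋃ m ∈ RR s n j, {ω | M (n + j) ω = m ∧ M (n + j + 1) ω = m'}) :=
            (measure_mono hcover).trans (measure_union_le _ _)
        _ ≤ 0 + ∑ m ∈ RR s n j, μ {ω | M (n + j) ω = m ∧ M (n + j + 1) ω = m'} :=
            add_le_add (le_of_eq (ae_iff.1 (hreach j))) (measure_biUnion_finset_le _ _)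
        _ = _ := zero_add _
    have hB : ∀ m ∈ RR s n j,
        ∑ m' ∈ RR s n (j + 1), S m' * μ {ω | M (n + j) ω = m ∧ M (n + j + 1) ω = m'}
          = ∑ b ∈ m.toFinset, S (split m b) * ((m.count b : ℝ≥0∞) / ((n + j : ℕ) : ℝ≥0∞))
              * μ {ω | M (n + j) ω = m} := by
      intro m hm
      rw [← Finset.sum_subset (splits_subset_RR hm)
        (fun m' _ hm' => by rw [hnull m m' hm', mul_zero])]
      rw [splits, Finset.sum_image (fun b hb b' hb' h =>
        split_inj (pos_of_mem_RR hs hm) (Multiset.mem_toFinset.1 hb)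
          (Multiset.mem_toFinset.1 hb') h)]
      refine Finset.sum_congr rfl fun b hb => ?_
      have hu := hunif (n + j) (Nat.le_add_right n j) m b (Multiset.mem_toFinset.1 hb)
      simp only [split]
      rw [hu]
      ring
    have hC : T (j + 1) ≤ ∑ m ∈ RR s n j, ∑ b ∈ m.toFinset,
        S (split m b) * ((m.count b : ℝ≥0∞) / ((n + j : ℕ) : ℝ≥0∞))
          * μ {ω | M (n + j) ω = m} := by
      simp only [hT]
      calc ∑ m' ∈ RR s n (j + 1), S m' * μ {ω | M (n + (j + 1)) ω = m'}
          ≤ ∑ m' ∈ RR s n (j + 1), S m' *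
              ∑ m ∈ RR s n j, μ {ω | M (n + j) ω = m ∧ M (n + j + 1) ω = m'} :=
            Finset.sum_le_sum fun m' _ => mul_le_mul_right (hA m') _
        _ = ∑ m ∈ RR s n j, ∑ m' ∈ RR s n (j + 1),
              S m' * μ {ω | M (n + j) ω = m ∧ M (n + j + 1) ω = m'} := by
            simp_rw [Finset.mul_sum]
            rw [Finset.sum_comm]
        _ = _ := Finset.sum_congr rfl hB
    calc 2 * ((n + j : ℕ) : ℝ≥0∞) * T (j + 1)
        ≤ 2 * ((n + j : ℕ) : ℝ≥0∞) * ∑ m ∈ RR s n j, ∑ b ∈ m.toFinset,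
            S (split m b) * ((m.count b : ℝ≥0∞) / ((n + j : ℕ) : ℝ≥0∞))
              * μ {ω | M (n + j) ω = m} := mul_le_mul_right hC _
      _ = ∑ m ∈ RR s n j, (2 * ∑ b ∈ m.toFinset, (m.count b : ℝ≥0∞) * S (split m b))
            * μ {ω | M (n + j) ω = m} := by
          rw [Finset.mul_sum]
          refine Finset.sum_congr rfl fun m hm => ?_
          rw [Finset.mul_sum, Finset.mul_sum, Finset.sum_mul]
          refine Finset.sum_congr rfl fun b hb => ?_
          rw [show 2 * ((n + j : ℕ) : ℝ≥0∞) *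
              (S (split m b) * ((m.count b : ℝ≥0∞) / ((n + j : ℕ) : ℝ≥0∞))
                * μ {ω | M (n + j) ω = m})
              = 2 * S (split m b) * μ {ω | M (n + j) ω = m} *
                (((n + j : ℕ) : ℝ≥0∞) * ((m.count b : ℝ≥0∞) / ((n + j : ℕ) : ℝ≥0∞)))
            from by ring]
          rw [ENNReal.mul_div_cancel hk0 hktop]
          ring
      _ = ∑ m ∈ RR s n j, ((2 * (n + j) - 1 : ℕ) : ℝ≥0∞) *
            (S m * μ {ω | M (n + j) ω = m}) := by
          refine Finset.sum_congr rfl fun m hm => ?_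
          have hkey := key_identity m
          rw [card_of_mem_RR hm] at hkey
          have hcast : ((2 * (n + j) - 1 : ℕ) : ℝ≥0∞) + 1 = 2 * ((n + j : ℕ) : ℝ≥0∞) := by
            have h : (2 * (n + j) - 1 : ℕ) + 1 = 2 * (n + j) := by omega
            exact_mod_cast congrArg (Nat.cast : ℕ → ℝ≥0∞) h
          have h2 : 2 * ∑ b ∈ m.toFinset, (m.count b : ℝ≥0∞) * S (split m b)
              = ((2 * (n + j) - 1 : ℕ) : ℝ≥0∞) * S m := by
            refine (ENNReal.add_left_inj (S_ne_top m)).1 ?_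
            rw [hkey, ← hcast]
            ring
          rw [h2]
          ring
      _ = ((2 * (n + j) - 1 : ℕ) : ℝ≥0∞) * T j := by
          simp only [hT]
          rw [Finset.mul_sum]
  -- real-valued contraction and convergence to 0
  have hTto0 : Tendsto T atTop (nhds 0) := by
    set t : ℕ → ℝ := fun j => (T j).toReal with ht
    have htnn : ∀ j, 0 ≤ t j := fun j => ENNReal.toReal_nonneg
    have hstep' : ∀ j : ℕ, t (j + 1) ≤ (1 - 1 / (2 * ((n : ℝ) + j))) * t j := by
      intro j
      have hkpos : (0 : ℝ) < 2 * ((n : ℝ) + j) := by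
        have : (1 : ℝ) ≤ (n : ℝ) := by exact_mod_cast hn
        positivity
      have hne : ((2 * (n + j) - 1 : ℕ) : ℝ≥0∞) * T j ≠ ⊤ :=
        ENNReal.mul_ne_top (ENNReal.natCast_ne_top _) (hTtop j)
      have h2 := ENNReal.toReal_mono hne (hcontr j)
      simp only [ENNReal.toReal_mul, ENNReal.toReal_ofNat, ENNReal.toReal_natCast] at h2
      have hc : ((2 * (n + j) - 1 : ℕ) : ℝ) = 2 * ((n : ℝ) + j) - 1 := by
        have h1 : (1 : ℕ) ≤ 2 * (n + j) := by omega
        push_cast [Nat.cast_sub h1]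
        ring
      have h3 : t (j + 1) ≤ (2 * ((n : ℝ) + j) - 1) / (2 * ((n : ℝ) + j)) * t j := by
        rw [div_mul_eq_mul_div, le_div_iff₀ hkpos]
        calc t (j + 1) * (2 * ((n : ℝ) + j)) = 2 * ((n : ℝ) + j) * t (j + 1) := by ring
          _ ≤ (2 * ((n : ℝ) + j) - 1) * t j := by
              rw [← hc]
              convert h2 using 3
              push_cast
              ring
      calc t (j + 1) ≤ (2 * ((n : ℝ) + j) - 1) / (2 * ((n : ℝ) + j)) * t j := h3
        _ = (1 - 1 / (2 * ((n : ℝ) + j))) * t j := by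
            field_simp
    have hfac : ∀ i : ℕ, 0 ≤ 1 - 1 / (2 * ((n : ℝ) + i)) := by
      intro i
      have h1 : (1 : ℝ) ≤ (n : ℝ) := by exact_mod_cast hn
      have hkpos : (0 : ℝ) < 2 * ((n : ℝ) + i) := by positivity
      rw [sub_nonneg, div_le_one hkpos]
      have : (0 : ℝ) ≤ (i : ℝ) := Nat.cast_nonneg i
      linarith
    have hprod : ∀ j : ℕ, t j ≤ t 0 * ∏ i ∈ Finset.range j, (1 - 1 / (2 * ((n : ℝ) + i))) := by
      intro j
      induction j with
      | zero => simp
      | succ j ih =>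
        rw [Finset.prod_range_succ]
        calc t (j + 1) ≤ (1 - 1 / (2 * ((n : ℝ) + j))) * t j := hstep' j
          _ ≤ (1 - 1 / (2 * ((n : ℝ) + j))) *
              (t 0 * ∏ i ∈ Finset.range j, (1 - 1 / (2 * ((n : ℝ) + i)))) :=
            mul_le_mul_of_nonneg_left ih (hfac j)
          _ = t 0 * ((∏ i ∈ Finset.range j, (1 - 1 / (2 * ((n : ℝ) + i)))) *
              (1 - 1 / (2 * ((n : ℝ) + j)))) := by ring
    have hexp : ∀ j : ℕ, ∏ i ∈ Finset.range j, (1 - 1 / (2 * ((n : ℝ) + i)))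
        ≤ Real.exp (-(∑ i ∈ Finset.range j, 1 / (2 * ((n : ℝ) + i)))) := by
      intro j
      calc ∏ i ∈ Finset.range j, (1 - 1 / (2 * ((n : ℝ) + i)))
          ≤ ∏ i ∈ Finset.range j, Real.exp (-(1 / (2 * ((n : ℝ) + i)))) := by
            refine Finset.prod_le_prod (fun i _ => hfac i) fun i _ => ?_
            have := Real.add_one_le_exp (-(1 / (2 * ((n : ℝ) + i))))
            linarith
        _ = Real.exp (-(∑ i ∈ Finset.range j, 1 / (2 * ((n : ℝ) + i)))) := by
            rw [← Real.exp_sum, ← Finset.sum_neg_distrib]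
    have hsum : Tendsto (fun j : ℕ => ∑ i ∈ Finset.range j, 1 / (2 * ((n : ℝ) + i)))
        atTop atTop := by
      have h1 : (1 : ℝ) ≤ (n : ℝ) := by exact_mod_cast hn
      have hmin : ∀ j : ℕ, (1 / (2 * (n : ℝ))) * ∑ i ∈ Finset.range j, (1 / ((i : ℝ) + 1))
          ≤ ∑ i ∈ Finset.range j, 1 / (2 * ((n : ℝ) + i)) := by
        intro j
        rw [Finset.mul_sum]
        refine Finset.sum_le_sum fun i _ => ?_
        have hi : (0 : ℝ) ≤ (i : ℝ) := Nat.cast_nonneg i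
        have hkpos : (0 : ℝ) < 2 * ((n : ℝ) + i) := by positivity
        rw [div_mul_div_comm, one_mul]
        refine one_div_le_one_div_of_le hkpos ?_
        nlinarith
      refine tendsto_atTop_mono hmin ?_
      exact (Real.tendsto_sum_range_one_div_nat_succ_atTop).const_mul_atTop (by positivity)
    have hexp0 : Tendsto (fun j : ℕ =>
        t 0 * Real.exp (-(∑ i ∈ Finset.range j, 1 / (2 * ((n : ℝ) + i))))) atTop (nhds 0) := by
      have h1 : Tendsto (fun j : ℕ =>
          Real.exp (-(∑ i ∈ Finset.range j, 1 / (2 * ((n : ℝ) + i))))) atTop (nhds 0) :=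
        Real.tendsto_exp_atBot.comp (tendsto_neg_atBot_iff.2 hsum)
      simpa using h1.const_mul (t 0)
    have htt : Tendsto t atTop (nhds 0) := by
      refine squeeze_zero htnn (fun j => ?_) hexp0
      exact (hprod j).trans (mul_le_mul_of_nonneg_left (hexp j) (htnn 0))
    have hTeq : T = fun j => ENNReal.ofReal (t j) :=
      funext fun j => (ENNReal.ofReal_toReal (hTtop j)).symm
    rw [hTeq]
    have := (ENNReal.continuous_ofReal.tendsto 0).comp htt
    simpa [Function.comp_def] using this
  -- the key null events
  have hkey : ∀ c : ℕ, μ {ω | ∀ j : ℕ, ((c : ℝ≥0∞) + 1)⁻¹ ≤ S (M (n + j) ω)} = 0 := by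
    intro c
    have hc1 : ((c : ℝ≥0∞) + 1) ≠ 0 := by simp
    have hc2 : ((c : ℝ≥0∞) + 1) ≠ ⊤ := by
      exact ENNReal.add_ne_top.2 ⟨ENNReal.natCast_ne_top c, ENNReal.one_ne_top⟩
    have hbound : ∀ j : ℕ, μ {ω | ∀ j' : ℕ, ((c : ℝ≥0∞) + 1)⁻¹ ≤ S (M (n + j') ω)}
        ≤ ((c : ℝ≥0∞) + 1) * T j := by
      intro j
      have hcover : {ω | ∀ j' : ℕ, ((c : ℝ≥0∞) + 1)⁻¹ ≤ S (M (n + j') ω)} ⊆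
          {ω | ¬ M (n + j) ω ∈ RR s n j} ∪
            ⋃ m ∈ (RR s n j).filter (fun m => ((c : ℝ≥0∞) + 1)⁻¹ ≤ S m),
              {ω | M (n + j) ω = m} := by
        intro ω hω
        by_cases h : M (n + j) ω ∈ RR s n j
        · exact Or.inr (Set.mem_biUnion (Finset.mem_filter.2 ⟨h, hω j⟩) rfl)
        · exact Or.inl h
      calc μ {ω | ∀ j' : ℕ, ((c : ℝ≥0∞) + 1)⁻¹ ≤ S (M (n + j') ω)}
          ≤ μ {ω | ¬ M (n + j) ω ∈ RR s n j} +
            μ (⋃ m ∈ (RR s n j).filter (fun m => ((c : ℝ≥0∞) + 1)⁻¹ ≤ S m),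
              {ω | M (n + j) ω = m}) := (measure_mono hcover).trans (measure_union_le _ _)
        _ ≤ 0 + ∑ m ∈ (RR s n j).filter (fun m => ((c : ℝ≥0∞) + 1)⁻¹ ≤ S m),
              μ {ω | M (n + j) ω = m} :=
            add_le_add (le_of_eq (ae_iff.1 (hreach j))) (measure_biUnion_finset_le _ _)
        _ ≤ ∑ m ∈ (RR s n j).filter (fun m => ((c : ℝ≥0∞) + 1)⁻¹ ≤ S m),
              ((c : ℝ≥0∞) + 1) * (S m * μ {ω | M (n + j) ω = m}) := by
            rw [zero_add]
            refine Finset.sum_le_sum fun m hm => ?_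
            have h1 : 1 ≤ ((c : ℝ≥0∞) + 1) * S m := by
              calc (1 : ℝ≥0∞) = ((c : ℝ≥0∞) + 1) * ((c : ℝ≥0∞) + 1)⁻¹ :=
                    (ENNReal.mul_inv_cancel hc1 hc2).symm
                _ ≤ ((c : ℝ≥0∞) + 1) * S m :=
                    mul_le_mul_right (Finset.mem_filter.1 hm).2 _
            calc μ {ω | M (n + j) ω = m} = 1 * μ {ω | M (n + j) ω = m} := (one_mul _).symm
              _ ≤ ((c : ℝ≥0∞) + 1) * S m * μ {ω | M (n + j) ω = m} := mul_le_mul_left h1 _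
              _ = ((c : ℝ≥0∞) + 1) * (S m * μ {ω | M (n + j) ω = m}) := mul_assoc _ _ _
        _ ≤ ((c : ℝ≥0∞) + 1) * T j := by
            simp only [hT]
            rw [Finset.mul_sum]
            exact Finset.sum_le_sum_of_subset (Finset.filter_subset _ _)
    have htend : Tendsto (fun j => ((c : ℝ≥0∞) + 1) * T j) atTop (nhds 0) := by
      have := ENNReal.Tendsto.const_mul hTto0 (Or.inr hc2)
      simpa using this
    exact le_antisymm (ge_of_tendsto' htend hbound) zero_le
  have hsmall : ∀ᵐ ω ∂μ, ∀ c : ℕ, ¬ (∀ j : ℕ, ((c : ℝ≥0∞) + 1)⁻¹ ≤ S (M (n + j) ω)) := by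
    rw [ae_all_iff]
    intro c
    rw [ae_iff]
    simpa using hkey c
  have hGae : ∀ᵐ ω ∂μ, ∀ j : ℕ, ∃ b ∈ M (n + j) ω,
      M (n + j + 1) ω = b / 2 ::ₘ b / 2 ::ₘ (M (n + j) ω).erase b :=
    ae_all_iff.2 fun j => hstep (n + j) (Nat.le_add_right n j)
  -- final pointwise argument
  filter_upwards [hGae, hsmall] with ω hGω hSω
  have hmem : ∀ j : ℕ, M (n + j) ω ∈ RR s n j := by
    intro j
    induction j with
    | zero => simp [RR, hinit ω]
    | succ j ih =>
      obtain ⟨b, hb, heq⟩ := hGω j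
      have h3 : M (n + (j + 1)) ω = split (M (n + j) ω) b := by
        rw [show n + (j + 1) = n + j + 1 from rfl, heq]; rfl
      rw [h3]
      exact splits_subset_RR ih (Finset.mem_image.2 ⟨b, Multiset.mem_toFinset.2 hb, rfl⟩)
  have hanti : Antitone fun j : ℕ => S (M (n + j) ω) := by
    refine antitone_nat_of_succ_le fun j => ?_
    obtain ⟨b, hb, heq⟩ := hGω j
    show S (M (n + (j + 1)) ω) ≤ S (M (n + j) ω)
    rw [show n + (j + 1) = n + j + 1 from rfl, heq]
    exact S_split_le hb
  have hS0 : Tendsto (fun j : ℕ => S (M (n + j) ω)) atTop (nhds 0) := by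
    rw [ENNReal.tendsto_nhds_zero]
    intro ε hε
    obtain ⟨c, hc⟩ := ENNReal.exists_inv_nat_lt (ne_of_gt hε)
    have hcc : ((c : ℝ≥0∞) + 1)⁻¹ < ε := by
      refine lt_of_le_of_lt ?_ hc
      exact ENNReal.inv_le_inv.2 (le_add_of_nonneg_right zero_le_one)
    obtain ⟨j0, hj0⟩ := not_forall.1 (hSω c)
    have hj0' : S (M (n + j0) ω) < ((c : ℝ≥0∞) + 1)⁻¹ := not_le.1 hj0
    filter_upwards [eventually_ge_atTop j0] with j hj
    exact le_of_lt (lt_of_le_of_lt (hanti hj) (lt_trans hj0' hcc))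
  have hS0' : Tendsto (fun k : ℕ => S (M k ω)) atTop (nhds 0) := by
    rw [← tendsto_add_atTop_iff_nat n]
    have : (fun k : ℕ => S (M (k + n) ω)) = fun j : ℕ => S (M (n + j) ω) := by
      funext j; rw [add_comm]
    rw [this]
    exact hS0
  have htr : Tendsto (fun k : ℕ => Real.sqrt ((S (M k ω)).toReal)) atTop (nhds 0) := by
    have h1 : Tendsto (fun k : ℕ => (S (M k ω)).toReal) atTop (nhds 0) := by
      have := (ENNReal.tendsto_toReal (by simp : (0 : ℝ≥0∞) ≠ ⊤)).comp hS0'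
      simpa [Function.comp_def] using this
    have := (Real.continuous_sqrt.tendsto 0).comp h1
    simpa [Function.comp_def] using this
  refine tendsto_of_tendsto_of_tendsto_of_le_of_le' tendsto_const_nhds htr ?_ ?_
  · filter_upwards [eventually_ge_atTop n] with k hk
    have hmk : M k ω ∈ RR s n (k - n) := by
      have := hmem (k - n)
      rwa [Nat.add_sub_cancel' hk] at this
    have hne : M k ω ≠ 0 := by
      intro h0
      have hcd := hcard k hk ω
      rw [h0] at hcd
      simp at hcd
      omega
    obtain ⟨b, hb⟩ := Multiset.exists_mem_of_ne_zero hne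
    have hbpos := pos_of_mem_RR hs hmk b hb
    have hbdd : BddAbove {x : ℝ | x ∈ M k ω} := (Multiset.finite_toSet _).bddAbove
    exact le_trans hbpos.le (le_csSup hbdd hb)
  · filter_upwards [eventually_ge_atTop n] with k hk
    have hmk : M k ω ∈ RR s n (k - n) := by
      have := hmem (k - n)
      rwa [Nat.add_sub_cancel' hk] at this
    have hne : M k ω ≠ 0 := by
      intro h0
      have hcd := hcard k hk ω
      rw [h0] at hcd
      simp at hcd
      omega
    obtain ⟨b, hb⟩ := Multiset.exists_mem_of_ne_zero hne
    refine csSup_le ⟨b, hb⟩ fun x hx => ?_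
    have hxpos := pos_of_mem_RR hs hmk x hx
    have h1 : x ^ 2 ≤ (S (M k ω)).toReal := by
      have h2 := q_mem_le_S hx
      have h3 := ENNReal.toReal_mono (S_ne_top _) h2
      rwa [show (q x).toReal = x ^ 2 from ENNReal.toReal_ofReal (sq_nonneg x)] at h3
    calc x = Real.sqrt (x ^ 2) := (Real.sqrt_sq hxpos.le).symm
      _ ≤ Real.sqrt ((S (M k ω)).toReal) := Real.sqrt_le_sqrt h1
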